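/- For every odd n ≥ 3 and every k ≥ 2, P*_DP(C_n, k) = (k−1)^n + 1, and this strictly exceeds P(C_n, k) = (k−1)^n − (k−1) when k ≥ 3. -/

import Mathlib

open scoped Classical

/-- Number of proper `k`-colorings of `G` (the chromatic polynomial evaluated at `k`). -/
noncomputable def properCount {V : Type*} (G : SimpleGraph V) (k : ℕ) : ℕ :=
  Nat.card {f : V → Fin k // ∀ u v, G.Adj u v → f u ≠ f v}

/-- Number of proper `L`-colorings of `G` for a list assignment `L`. -/
noncomputable def listCount {V : Type*} (G : SimpleGraph V) (L : V → Finset ℕ) : ℕ :=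
  Nat.card {f : V → ℕ // (∀ v, f v ∈ L v) ∧ ∀ u v, G.Adj u v → f u ≠ f v}

/-- The list color function `P_ℓ(G, k)`. -/
noncomputable def listColorFn {V : Type*} (G : SimpleGraph V) (k : ℕ) : ℕ :=
  sInf {m | ∃ L : V → Finset ℕ, (∀ v, (L v).card = k) ∧ m = listCount G L}

/-- `H` (on vertex set `V × Fin k`, with `L v = {v} × Fin k`) is a `k`-fold DP-cover of `G`:
each part is a clique, cross-edges only between parts of adjacent vertices, and the
cross-edges between parts of adjacent vertices form a matching. -/
def IsDPCover {V : Type*} (G : SimpleGraph V) (k : ℕ) (H : SimpleGraph (V × Fin k)) : Prop :=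
  (∀ v : V, ∀ i j : Fin k, i ≠ j → H.Adj (v, i) (v, j)) ∧
  (∀ u v : V, ∀ i j : Fin k, H.Adj (u, i) (v, j) → u = v ∨ G.Adj u v) ∧
  (∀ u v : V, G.Adj u v →
    (∀ i j j' : Fin k, H.Adj (u, i) (v, j) → H.Adj (u, i) (v, j') → j = j') ∧
    (∀ i i' j : Fin k, H.Adj (u, i) (v, j) → H.Adj (u, i') (v, j) → i = i'))

/-- A full `k`-fold DP-cover: the matching between the parts of adjacent vertices is perfect. -/
def IsFullDPCover {V : Type*} (G : SimpleGraph V) (k : ℕ) (H : SimpleGraph (V × Fin k)) : Prop :=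
  IsDPCover G k H ∧ ∀ u v : V, G.Adj u v → ∀ i : Fin k, ∃! j : Fin k, H.Adj (u, i) (v, j)

/-- The number of `H`-colorings of `G` (independent sets of `H` with one vertex in each part,
encoded as functions `V → Fin k`). -/
noncomputable def dpCount {V : Type*} (k : ℕ) (H : SimpleGraph (V × Fin k)) : ℕ :=
  Nat.card {f : V → Fin k // ∀ u v : V, u ≠ v → ¬ H.Adj (u, f u) (v, f v)}

/-- The DP color function `P_DP(G, k)`. -/
noncomputable def dpColorFn {V : Type*} (G : SimpleGraph V) (k : ℕ) : ℕ :=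
  sInf {m | ∃ H : SimpleGraph (V × Fin k), IsDPCover G k H ∧ m = dpCount k H}

/-- The dual DP color function `P*_DP(G, k)`. -/
noncomputable def dualDPColorFn {V : Type*} (G : SimpleGraph V) (k : ℕ) : ℕ :=
  sSup {m | ∃ H : SimpleGraph (V × Fin k), IsFullDPCover G k H ∧ m = dpCount k H}

section AuxStmt17
open Finset
open Fin.NatCast


/-- path property: consecutive entries differ -/
def pprop {k : ℕ} (m : ℕ) (g : Fin (m+1) → Fin k) : Prop :=
  ∀ j : Fin m, g j.succ ≠ g j.castSucc

noncomputable def pset (k m : ℕ) (a b : Fin k) : Finset (Fin (m+1) → Fin k) :=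
  univ.filter (fun g => g 0 = a ∧ g (Fin.last m) = b ∧ pprop m g)

lemma mem_pset {k m : ℕ} {a b : Fin k} {g : Fin (m+1) → Fin k} :
    g ∈ pset k m a b ↔ g 0 = a ∧ g (Fin.last m) = b ∧ pprop m g := by
  simp [pset]

lemma pset_zero (k : ℕ) (a b : Fin k) :
    (pset k 0 a b).card = if a = b then 1 else 0 := by
  have hlast : (Fin.last 0) = (0 : Fin 1) := rfl
  split_ifs with h
  · subst h
    rw [Finset.card_eq_one]
    refine ⟨fun _ => a, ?_⟩
    ext g
    rw [mem_pset, mem_singleton]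
    constructor
    · rintro ⟨h0, -, -⟩
      funext i
      have : i = 0 := by ext; omega
      rw [this, h0]
    · rintro rfl
      exact ⟨rfl, rfl, fun j => j.elim0⟩
  · rw [Finset.card_eq_zero]
    ext g
    simp only [Finset.notMem_empty, iff_false]
    rw [mem_pset]
    rintro ⟨rfl, h1, -⟩
    rw [hlast] at h1
    exact h h1

lemma pset_succ (k m : ℕ) (a b : Fin k) :
    (pset k (m+1) a b).card = ∑ c ∈ univ.erase b, (pset k m a c).card := by
  rw [Finset.card_eq_sum_card_fiberwise
    (f := fun g : Fin (m+2) → Fin k => g (Fin.last m).castSucc) (t := univ.erase b) ?_]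
  · refine Finset.sum_congr rfl fun c hc => ?_
    refine Finset.card_nbij' (fun g => Fin.init g) (fun g => Fin.snoc g b) ?_ ?_ ?_ ?_
    · rintro g hg
      rw [Finset.mem_coe, mem_filter, mem_pset] at hg
      obtain ⟨⟨h0, hl, hp⟩, hc'⟩ := hg
      rw [Finset.mem_coe, mem_pset]
      refine ⟨?_, hc', ?_⟩
      · show g (Fin.castSucc 0) = a
        rwa [Fin.castSucc_zero]
      · intro j
        show g j.succ.castSucc ≠ g j.castSucc.castSucc
        rw [← Fin.succ_castSucc]
        exact hp j.castSucc
    · rintro g hg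
      rw [Finset.mem_coe, mem_pset] at hg
      obtain ⟨h0, hl, hp⟩ := hg
      rw [Finset.mem_coe, mem_filter, mem_pset]
      have hcb : c ≠ b := (Finset.mem_erase.1 hc).1
      refine ⟨⟨?_, ?_, ?_⟩, ?_⟩
      · beta_reduce
        rw [show (0 : Fin (m+2)) = Fin.castSucc 0 by simp, Fin.snoc_castSucc]
        exact h0
      · beta_reduce
        rw [Fin.snoc_last]
      · intro j
        beta_reduce
        refine Fin.lastCases ?_ ?_ j
        · rw [Fin.succ_last, Fin.snoc_last, Fin.snoc_castSucc, hl]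
          exact fun hh => hcb hh.symm
        · intro i
          rw [Fin.succ_castSucc, Fin.snoc_castSucc, Fin.snoc_castSucc]
          exact hp i
      · beta_reduce
        rw [Fin.snoc_castSucc]
        exact hl
    · intro g hg
      rw [Finset.mem_coe, mem_filter, mem_pset] at hg
      have hb : b = g (Fin.last (m+1)) := hg.1.2.1.symm
      rw [hb]
      exact Fin.snoc_init_self g
    · intro g hg
      beta_reduce
      exact Fin.init_snoc (α := fun _ : Fin (m+2) => Fin k) b g
  · intro g hg
    rw [Finset.mem_coe, mem_pset] at hg
    obtain ⟨h0, hl, hp⟩ := hg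
    refine Finset.mem_erase.2 ⟨?_, mem_univ _⟩
    have := hp (Fin.last m)
    rw [Fin.succ_last, hl] at this
    exact fun h => this (h ▸ rfl)

lemma pset_sum (k' : ℕ) : ∀ (m : ℕ) (a : Fin (k'+1)),
    ∑ c, (pset (k'+1) m a c).card = k' ^ m := by
  intro m
  induction m with
  | zero =>
    intro a
    simp only [pset_zero, pow_zero]
    rw [Finset.sum_ite_eq univ a (fun _ => 1)]
    simp
  | succ m ih =>
    intro a
    have h1 : ∀ b : Fin (k'+1), (pset (k'+1) (m+1) a b).card + (pset (k'+1) m a b).card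
        = k' ^ m := by
      intro b
      rw [pset_succ, Finset.sum_erase_add univ _ (mem_univ b), ih a]
    have h2 : (∑ b : Fin (k'+1), (pset (k'+1) (m+1) a b).card)
        + (∑ b : Fin (k'+1), (pset (k'+1) m a b).card) = (k'+1) * k' ^ m := by
      rw [← Finset.sum_add_distrib]
      rw [Finset.sum_congr rfl (fun b _ => h1 b)]
      simp [Finset.sum_const, mul_comm]
    rw [ih a] at h2
    have h3 : (k'+1) * k' ^ m = k' ^ (m+1) + k' ^ m := by ring
    omega

lemma pset_card_int (k' : ℕ) : ∀ (m : ℕ) (a b : Fin (k'+1)),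
    ((k':ℤ)+1) * (pset (k'+1) m a b).card
      = (k':ℤ)^m + (-1)^m * (if a = b then (k':ℤ) else -1) := by
  intro m
  induction m with
  | zero =>
    intro a b
    rw [pset_zero]
    split_ifs <;> simp <;> ring
  | succ m ih =>
    intro a b
    have h1 : ((pset (k'+1) (m+1) a b).card : ℤ) + (pset (k'+1) m a b).card = (k':ℤ)^m := by
      have h2 : (pset (k'+1) (m+1) a b).card + (pset (k'+1) m a b).card = k' ^ m := by
        rw [pset_succ, Finset.sum_erase_add univ _ (mem_univ b), pset_sum]
      exact_mod_cast congrArg (fun x : ℕ => (x : ℤ)) h2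
    have hkey : ((k':ℤ)+1) * (pset (k'+1) (m+1) a b).card
        = ((k':ℤ)+1) * (k':ℤ)^m - ((k':ℤ)+1) * (pset (k'+1) m a b).card := by
      have := congrArg (fun x : ℤ => ((k':ℤ)+1) * x) h1
      simp only [mul_add] at this
      linarith
    rw [hkey, ih a b]
    split_ifs <;> ring

/-- cycle set with twist σ -/
noncomputable def cset (k m : ℕ) (σ : Equiv.Perm (Fin k)) : Finset (Fin (m+1) → Fin k) :=
  univ.filter (fun g => pprop m g ∧ g 0 ≠ σ (g (Fin.last m)))

noncomputable def fixCount (k : ℕ) (σ : Equiv.Perm (Fin k)) : ℕ :=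
  (univ.filter (fun b : Fin k => σ b = b)).card

lemma cset_card_sum (k m : ℕ) (σ : Equiv.Perm (Fin k)) :
    (cset k m σ).card
      = ∑ p : Fin k × Fin k, if p.1 ≠ σ p.2 then (pset k m p.1 p.2).card else 0 := by
  rw [Finset.card_eq_sum_card_fiberwise
    (f := fun g : Fin (m+1) → Fin k => (g 0, g (Fin.last m))) (t := univ) (fun g _ => mem_univ _)]
  refine Finset.sum_congr rfl fun p _ => ?_
  obtain ⟨p1, p2⟩ := p
  split_ifs with h
  · congr 1
    ext g
    simp only [cset, mem_filter, mem_univ, true_and, mem_pset, Prod.mk.injEq]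
    constructor
    · rintro ⟨⟨hp, -⟩, h0, hl⟩
      exact ⟨h0, hl, hp⟩
    · rintro ⟨h0, hl, hp⟩
      exact ⟨⟨hp, by rw [h0, hl]; exact h⟩, h0, hl⟩
  · rw [Finset.card_eq_zero]
    ext g
    simp only [cset, mem_filter, mem_univ, true_and, Prod.mk.injEq, Finset.notMem_empty,
      iff_false, not_and]
    push_neg at h
    rintro ⟨-, hne⟩ h0 hl
    exact hne (by rw [h0, hl]; exact h)

lemma cset_card_int (k' m : ℕ) (σ : Equiv.Perm (Fin (k'+1))) :
    ((cset (k'+1) m σ).card : ℤ)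
      = (k':ℤ)^(m+1) + (-1)^m * (1 - (fixCount (k'+1) σ : ℤ)) := by
  have hk : ((k':ℤ)+1) ≠ 0 := by positivity
  have hle : fixCount (k'+1) σ ≤ k'+1 := by
    refine le_trans (Finset.card_filter_le _ _) (by simp)
  apply mul_left_cancel₀ hk
  rw [cset_card_sum]
  push_cast
  rw [Finset.mul_sum]
  have hterm : ∀ p : Fin (k'+1) × Fin (k'+1),
      ((k':ℤ)+1) * (if p.1 ≠ σ p.2 then ((pset (k'+1) m p.1 p.2).card : ℤ) else 0)
      = (if p.1 ≠ σ p.2 then ((k':ℤ)^m + (-1)^m * (if p.1 = p.2 then (k':ℤ) else -1)) else 0) := by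
    intro p
    by_cases h : p.1 ≠ σ p.2
    · rw [if_pos h, if_pos h]
      exact pset_card_int k' m p.1 p.2
    · rw [if_neg h, if_neg h, mul_zero]
  rw [Finset.sum_congr rfl (fun p _ => hterm p)]
  rw [Fintype.sum_prod_type_right]
  have e2' : ∀ b : Fin (k'+1),
      (∑ a : Fin (k'+1), (-1:ℤ)^m * (if a = b then (k':ℤ) else -1)) = 0 := by
    intro b
    rw [← Finset.mul_sum]
    have step : ∀ a : Fin (k'+1), (if a = b then (k':ℤ) else -1)
        = (if a = b then ((k':ℤ)+1) else 0) - 1 := by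
      intro a; split_ifs <;> ring
    rw [Finset.sum_congr rfl (fun a _ => step a), Finset.sum_sub_distrib,
      Finset.sum_ite_eq' univ b (fun _ => ((k':ℤ)+1)), Finset.sum_const, Finset.card_univ,
      Fintype.card_fin, nsmul_eq_mul]
    simp
  have e1' : (∑ _a : Fin (k'+1), (k':ℤ)^m) = ((k':ℤ)+1) * (k':ℤ)^m := by
    rw [Finset.sum_const, Finset.card_univ, Fintype.card_fin, nsmul_eq_mul]
    push_cast
    ring
  have hinner : ∀ b : Fin (k'+1),
      (∑ a : Fin (k'+1), if a ≠ σ b then ((k':ℤ)^m + (-1)^m * (if a = b then (k':ℤ) else -1)) else 0)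
      = ((k':ℤ)+1) * (k':ℤ)^m - ((k':ℤ)^m + (-1)^m * (if σ b = b then (k':ℤ) else -1)) := by
    intro b
    have expand : ∀ a : Fin (k'+1),
        (if a ≠ σ b then ((k':ℤ)^m + (-1)^m * (if a = b then (k':ℤ) else -1)) else 0)
        = ((k':ℤ)^m + (-1)^m * (if a = b then (k':ℤ) else -1))
          - (if a = σ b then ((k':ℤ)^m + (-1)^m * (if a = b then (k':ℤ) else -1)) else 0) := by
      intro a
      by_cases h : a = σ b <;> simp [h]
    rw [Finset.sum_congr rfl (fun a _ => expand a), Finset.sum_sub_distrib,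
      Finset.sum_ite_eq' univ (σ b)
        (fun a => ((k':ℤ)^m + (-1)^m * (if a = b then (k':ℤ) else -1)))]
    simp only [mem_univ, if_true]
    rw [Finset.sum_add_distrib, e1', e2' b]
    ring
  rw [Finset.sum_congr rfl (fun b _ => hinner b)]
  rw [Finset.sum_sub_distrib, Finset.sum_add_distrib]
  have e1 : (∑ _b : Fin (k'+1), ((k':ℤ)+1) * (k':ℤ)^m) = ((k':ℤ)+1) * (((k':ℤ)+1) * (k':ℤ)^m) := by
    rw [Finset.sum_const, Finset.card_univ, Fintype.card_fin, nsmul_eq_mul]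
    push_cast
    ring
  have e3 : (∑ b : Fin (k'+1), (-1:ℤ)^m * (if σ b = b then (k':ℤ) else -1))
      = (-1:ℤ)^m * ((fixCount (k'+1) σ : ℤ) * ((k':ℤ)+1) - ((k':ℤ)+1)) := by
    rw [← Finset.mul_sum]
    congr 1
    have step : ∀ b : Fin (k'+1), (if σ b = b then (k':ℤ) else -1)
        = (if σ b = b then ((k':ℤ)+1) else 0) - 1 := by
      intro b; split_ifs <;> ring
    rw [Finset.sum_congr rfl (fun b _ => step b), Finset.sum_sub_distrib, Finset.sum_ite,
      Finset.sum_const, Finset.sum_const, Finset.sum_const, Finset.card_univ, Fintype.card_fin]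
    have h1 : (Finset.filter (fun b : Fin (k'+1) => σ b = b) univ).card = fixCount (k'+1) σ := rfl
    rw [h1]
    simp only [smul_zero, nsmul_eq_mul]
    push_cast
    ring
  rw [e1, e3, e1']
  ring

lemma mem_cset {k m : ℕ} {σ : Equiv.Perm (Fin k)} {g : Fin (m+1) → Fin k} :
    g ∈ cset k m σ ↔ pprop m g ∧ g 0 ≠ σ (g (Fin.last m)) := by simp [cset]

def tprop {k m : ℕ} (τ : Fin (m+2) → Equiv.Perm (Fin k)) (f : Fin (m+2) → Fin k) : Prop :=
  ∀ i : Fin (m+2), f (i+1) ≠ τ i (f i)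

noncomputable def tset (k m : ℕ) (τ : Fin (m+2) → Equiv.Perm (Fin k)) :
    Finset (Fin (m+2) → Fin k) :=
  univ.filter (tprop τ)

lemma mem_tset {k m : ℕ} {τ : Fin (m+2) → Equiv.Perm (Fin k)} {f : Fin (m+2) → Fin k} :
    f ∈ tset k m τ ↔ tprop τ f := by simp [tset]

def rho {k m : ℕ} (τ : Fin (m+2) → Equiv.Perm (Fin k)) : ℕ → Equiv.Perm (Fin k)
  | 0 => 1
  | (j+1) => τ (j : Fin (m+2)) * rho τ j

lemma rho_succ_apply {k m : ℕ} (τ : Fin (m+2) → Equiv.Perm (Fin k)) (j : ℕ) (x : Fin k) :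
    rho τ (j+1) ((rho τ j)⁻¹ x) = τ (j : Fin (m+2)) x := by
  show (τ (j : Fin (m+2)) * rho τ j) ((rho τ j)⁻¹ x) = _
  simp [Equiv.Perm.mul_apply]

lemma cast_castSucc {m : ℕ} (j : Fin (m+1)) :
    ((j.val : ℕ) : Fin (m+2)) = j.castSucc := by
  have : (j.castSucc).val = j.val := rfl
  rw [← this, Fin.cast_val_eq_self]

lemma cast_last {m : ℕ} : (((m+1 : ℕ)) : Fin (m+2)) = Fin.last (m+1) := by
  ext
  rw [Fin.val_cast_of_lt (by omega)]
  rfl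

lemma tprop_iff {k m : ℕ} (τ : Fin (m+2) → Equiv.Perm (Fin k)) (f : Fin (m+2) → Fin k) :
    tprop τ f ↔ (pprop (m+1) (fun i : Fin (m+2) => (rho τ i.val)⁻¹ (f i)) ∧
      (fun i : Fin (m+2) => (rho τ i.val)⁻¹ (f i)) 0
        ≠ rho τ (m+2) ((fun i : Fin (m+2) => (rho τ i.val)⁻¹ (f i)) (Fin.last (m+1)))) := by
  have hwrap : ((fun i : Fin (m+2) => (rho τ i.val)⁻¹ (f i)) 0
        = rho τ (m+2) ((fun i : Fin (m+2) => (rho τ i.val)⁻¹ (f i)) (Fin.last (m+1))))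
      ↔ f 0 = τ (Fin.last (m+1)) (f (Fin.last (m+1))) := by
    beta_reduce
    have h0 : ((0 : Fin (m+2)).val) = 0 := rfl
    have hlv : ((Fin.last (m+1)).val) = m+1 := rfl
    rw [h0, hlv]
    show (rho τ 0)⁻¹ (f 0) = _ ↔ _
    rw [show (rho τ 0 : Equiv.Perm (Fin k)) = 1 from rfl]
    rw [show rho τ (m+2) = rho τ (m+1+1) from rfl, rho_succ_apply τ (m+1), cast_last]
    simp
  have hstep : ∀ j : Fin (m+1),
      (((fun i : Fin (m+2) => (rho τ i.val)⁻¹ (f i)) j.succ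
        = (fun i : Fin (m+2) => (rho τ i.val)⁻¹ (f i)) j.castSucc))
      ↔ f (j.castSucc + 1) = τ j.castSucc (f j.castSucc) := by
    intro j
    beta_reduce
    rw [Fin.coeSucc_eq_succ]
    have hsv : (j.succ : Fin (m+2)).val = j.val + 1 := rfl
    have hcv : (j.castSucc : Fin (m+2)).val = j.val := rfl
    rw [hsv, hcv]
    constructor
    · intro h
      have h2 := congrArg (rho τ (j.val+1)) h
      simp only [show ∀ (e : Equiv.Perm (Fin k)) y, e (e⁻¹ y) = y from fun e y => e.apply_symm_apply y] at h2
      rw [rho_succ_apply, cast_castSucc] at h2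
      exact h2
    · intro h
      rw [h, ← cast_castSucc j, ← rho_succ_apply τ j.val]
      simp
  constructor
  · intro h
    refine ⟨fun j => ?_, fun hc => ?_⟩
    · rw [Ne, hstep j]
      exact h j.castSucc
    · rw [hwrap] at hc
      have := h (Fin.last (m+1))
      rw [Fin.last_add_one] at this
      exact this hc
  · rintro ⟨hp, hw⟩ i
    refine Fin.lastCases ?_ ?_ i
    · rw [Fin.last_add_one]
      intro hc
      exact hw (hwrap.2 hc)
    · intro j
      rw [Ne, ← hstep j]
      exact hp j

lemma tset_card (k m : ℕ) (τ : Fin (m+2) → Equiv.Perm (Fin k)) :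
    (tset k m τ).card = (cset k (m+1) (rho τ (m+2))).card := by
  refine Finset.card_nbij' (fun f => fun i => (rho τ i.val)⁻¹ (f i))
    (fun g => fun i => rho τ i.val (g i)) ?_ ?_ ?_ ?_
  · intro f hf
    rw [Finset.mem_coe, mem_tset] at hf
    rw [Finset.mem_coe, mem_cset]
    exact (tprop_iff τ f).1 hf
  · intro g hg
    rw [Finset.mem_coe, mem_cset] at hg
    rw [Finset.mem_coe, mem_tset]
    have hfg : (fun i : Fin (m+2) => (rho τ i.val)⁻¹ ((fun i : Fin (m+2) => rho τ i.val (g i)) i)) = g := by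
      funext i
      simp
    refine (tprop_iff τ _).2 ?_
    rw [hfg]
    exact hg
  · intro f hf
    funext i
    simp
  · intro g hg
    funext i
    simp

-- ===== Fin (m+2) arithmetic =====
lemma fin_val_add_one {m : ℕ} (u : Fin (m+2)) : (u+1).val = (u.val + 1) % (m+2) := by
  rw [Fin.add_def, Fin.val_one]

lemma fin_mod_cases {m : ℕ} (u : Fin (m+2)) :
    (u.val + 1) % (m+2) = u.val + 1 ∨ ((u.val + 1) % (m+2) = 0 ∧ u.val = m+1) := by
  rcases Nat.lt_or_ge (u.val+1) (m+2) with h | h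
  · exact Or.inl (Nat.mod_eq_of_lt h)
  · have hv := u.isLt
    have he : u.val + 1 = m+2 := by omega
    right
    constructor
    · rw [he]; simp
    · omega

lemma self_ne_add_one {m : ℕ} (u : Fin (m+2)) : u ≠ u + 1 := by
  intro h
  have hv := congrArg Fin.val h
  rw [fin_val_add_one] at hv
  rcases fin_mod_cases u with h1 | ⟨h1, h2⟩ <;> omega

lemma not_both {m : ℕ} (hm : 1 ≤ m) (u v : Fin (m+2)) (h1 : v = u + 1) (h2 : u = v + 1) :
    False := by
  have hv1 := congrArg Fin.val h1
  have hv2 := congrArg Fin.val h2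
  rw [fin_val_add_one] at hv1 hv2
  have hu := u.isLt
  have hv := v.isLt
  rcases fin_mod_cases u with a1 | ⟨a1, a2⟩ <;> rcases fin_mod_cases v with b1 | ⟨b1, b2⟩ <;> omega

lemma adj_iff {m : ℕ} (u v : Fin (m+2)) :
    (SimpleGraph.cycleGraph (m+2)).Adj u v ↔ (u = v + 1 ∨ v = u + 1) := by
  rw [SimpleGraph.cycleGraph_adj]
  constructor
  · rintro (h | h)
    · left; rw [sub_eq_iff_eq_add] at h; rw [h]; exact add_comm 1 v
    · right; rw [sub_eq_iff_eq_add] at h; rw [h]; exact add_comm 1 u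
  · rintro (h | h)
    · left; rw [sub_eq_iff_eq_add, h]; exact add_comm v 1
    · right; rw [sub_eq_iff_eq_add, h]; exact add_comm u 1

lemma adj_succ {m : ℕ} (u : Fin (m+2)) :
    (SimpleGraph.cycleGraph (m+2)).Adj u (u+1) := (adj_iff u (u+1)).2 (Or.inr rfl)

-- ===== dpCount via tset, for H with matching structure =====
lemma dpCount_eq_tset {k m : ℕ} (H : SimpleGraph (Fin (m+2) × Fin k))
    (τ : Fin (m+2) → Equiv.Perm (Fin k))
    (hmatch : ∀ (u : Fin (m+2)) (i j : Fin k), H.Adj (u, i) (u+1, j) ↔ j = τ u i)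
    (hside : ∀ (u v : Fin (m+2)) (i j : Fin k),
      H.Adj (u, i) (v, j) → u = v ∨ u = v + 1 ∨ v = u + 1) :
    dpCount k H = (tset k m τ).card := by
  rw [dpCount, Nat.card_eq_fintype_card, Fintype.card_subtype]
  congr 1
  apply Finset.filter_congr
  intro f _
  constructor
  · intro h i hc
    exact h i (i+1) (self_ne_add_one i) ((hmatch i (f i) (f (i+1))).2 hc)
  · intro h u v huv hadj
    rcases hside u v (f u) (f v) hadj with h1 | h1 | h1
    · exact huv h1
    · subst h1
      exact h v ((hmatch v (f v) (f (v+1))).1 hadj.symm)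
    · subst h1
      exact h u ((hmatch u (f u) (f (u+1))).1 hadj)

-- ===== extraction of τ from a full cover =====
lemma exists_tau {k m : ℕ} (H : SimpleGraph (Fin (m+2) × Fin k))
    (hH : IsFullDPCover (SimpleGraph.cycleGraph (m+2)) k H) :
    ∃ τ : Fin (m+2) → Equiv.Perm (Fin k),
      ∀ (u : Fin (m+2)) (i j : Fin k), H.Adj (u, i) (u+1, j) ↔ j = τ u i := by
  have hchoice : ∀ u : Fin (m+2), ∃ e : Equiv.Perm (Fin k),
      ∀ i j : Fin k, H.Adj (u, i) (u+1, j) ↔ j = e i := by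
    intro u
    have hadj := adj_succ u
    have h1 := hH.2 u (u+1) hadj
    choose fn hfn using fun i => (h1 i).exists
    have hinj : Function.Injective fn := by
      intro i i' hii
      exact (hH.1.2.2 u (u+1) hadj).2 i i' (fn i) (hfn i) (hii ▸ hfn i')
    have hbij : Function.Bijective fn := Finite.injective_iff_bijective.1 hinj
    refine ⟨Equiv.ofBijective fn hbij, fun i j => ?_⟩
    constructor
    · intro hadj2
      exact ((h1 i).unique hadj2 (hfn i)).trans rfl
    · rintro rfl
      exact hfn i
  choose τ hτ using hchoice
  exact ⟨τ, hτ⟩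

-- ===== construction of cover from twist family =====
def coverOf (k m : ℕ) (τ : Fin (m+2) → Equiv.Perm (Fin k)) :
    SimpleGraph (Fin (m+2) × Fin k) where
  Adj p q := (p.1 = q.1 ∧ p.2 ≠ q.2) ∨ (q.1 = p.1 + 1 ∧ q.2 = τ p.1 p.2) ∨
    (p.1 = q.1 + 1 ∧ p.2 = τ q.1 q.2)
  symm := by
    constructor
    rintro ⟨u, i⟩ ⟨v, j⟩ (⟨h1, h2⟩ | ⟨h1, h2⟩ | ⟨h1, h2⟩)
    · exact Or.inl ⟨h1.symm, h2.symm⟩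
    · exact Or.inr (Or.inr ⟨h1, h2⟩)
    · exact Or.inr (Or.inl ⟨h1, h2⟩)
  loopless := by
    constructor
    rintro ⟨u, i⟩ (⟨h1, h2⟩ | ⟨h1, h2⟩ | ⟨h1, h2⟩)
    · exact h2 rfl
    · exact self_ne_add_one u h1
    · exact self_ne_add_one u h1

lemma coverOf_adj_succ {k m : ℕ} (hm : 1 ≤ m) (τ : Fin (m+2) → Equiv.Perm (Fin k))
    (u : Fin (m+2)) (i j : Fin k) :
    (coverOf k m τ).Adj (u, i) (u+1, j) ↔ j = τ u i := by
  constructor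
  · rintro (⟨h1, h2⟩ | ⟨h1, h2⟩ | ⟨h1, h2⟩)
    · exact absurd h1 (self_ne_add_one u)
    · exact h2
    · exact (not_both hm u (u+1) rfl h1).elim
  · rintro rfl
    exact Or.inr (Or.inl ⟨rfl, rfl⟩)

lemma coverOf_full {k m : ℕ} (hm : 1 ≤ m) (τ : Fin (m+2) → Equiv.Perm (Fin k)) :
    IsFullDPCover (SimpleGraph.cycleGraph (m+2)) k (coverOf k m τ) := by
  have hcases : ∀ (u v : Fin (m+2)), (SimpleGraph.cycleGraph (m+2)).Adj u v →
      (v = u + 1 ∧ ¬ u = v + 1) ∨ (u = v + 1 ∧ ¬ v = u + 1) := by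
    intro u v hadj
    rcases (adj_iff u v).1 hadj with h | h
    · exact Or.inr ⟨h, fun hh => not_both hm u v hh h⟩
    · exact Or.inl ⟨h, fun hh => not_both hm u v h hh⟩
  have hne : ∀ (u v : Fin (m+2)), (SimpleGraph.cycleGraph (m+2)).Adj u v → u ≠ v :=
    fun u v hadj => (SimpleGraph.cycleGraph (m+2)).ne_of_adj hadj
  refine ⟨⟨fun v i j hij => Or.inl ⟨rfl, hij⟩, ?_, ?_⟩, ?_⟩
  · rintro u v i j (⟨h1, -⟩ | ⟨h1, -⟩ | ⟨h1, -⟩)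
    · exact Or.inl h1
    · exact Or.inr ((adj_iff u v).2 (Or.inr h1))
    · exact Or.inr ((adj_iff u v).2 (Or.inl h1))
  · intro u v hadj
    have huv := hne u v hadj
    rcases hcases u v hadj with ⟨h1, h2⟩ | ⟨h1, h2⟩
    · -- v = u + 1
      subst h1
      constructor
      · intro i j j' ha hb
        rw [coverOf_adj_succ hm] at ha hb
        rw [ha, hb]
      · intro i i' j ha hb
        rw [coverOf_adj_succ hm] at ha hb
        exact (τ u).injective (ha.symm.trans hb)
    · -- u = v + 1
      subst h1
      constructor
      · intro i j j' ha hb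
        rw [SimpleGraph.adj_comm, coverOf_adj_succ hm] at ha hb
        exact (τ v).injective (ha.symm.trans hb)
      · intro i i' j ha hb
        rw [SimpleGraph.adj_comm, coverOf_adj_succ hm] at ha hb
        rw [ha, hb]
  · intro u v hadj i
    rcases hcases u v hadj with ⟨h1, h2⟩ | ⟨h1, h2⟩
    · subst h1
      exact ⟨τ u i, (coverOf_adj_succ hm τ u i _).2 rfl,
        fun j hj => (coverOf_adj_succ hm τ u i j).1 hj⟩
    · subst h1
      refine ⟨(τ v)⁻¹ i, ?_, ?_⟩
      · have : (coverOf k m τ).Adj (v, (τ v)⁻¹ i) (v+1, i) := by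
          rw [coverOf_adj_succ hm]
          simp
        exact this.symm
      · intro j hj
        have := (coverOf_adj_succ hm τ v j i).1 hj.symm
        rw [this]
        simp

lemma coverOf_hside {k m : ℕ} (τ : Fin (m+2) → Equiv.Perm (Fin k)) :
    ∀ (u v : Fin (m+2)) (i j : Fin k),
      (coverOf k m τ).Adj (u, i) (v, j) → u = v ∨ u = v + 1 ∨ v = u + 1 := by
  rintro u v i j (⟨h1, -⟩ | ⟨h1, -⟩ | ⟨h1, -⟩)
  · exact Or.inl h1
  · exact Or.inr (Or.inr h1)
  · exact Or.inr (Or.inl h1)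

lemma dpCount_coverOf {k m : ℕ} (hm : 1 ≤ m) (τ : Fin (m+2) → Equiv.Perm (Fin k)) :
    dpCount k (coverOf k m τ) = (tset k m τ).card :=
  dpCount_eq_tset (coverOf k m τ) τ (fun u i j => coverOf_adj_succ hm τ u i j)
    (coverOf_hside τ)

lemma dpCount_full_cover {k m : ℕ} (hm : 1 ≤ m) (H : SimpleGraph (Fin (m+2) × Fin k))
    (hH : IsFullDPCover (SimpleGraph.cycleGraph (m+2)) k H) :
    ∃ τ : Fin (m+2) → Equiv.Perm (Fin k), dpCount k H = (tset k m τ).card := by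
  obtain ⟨τ, hτ⟩ := exists_tau H hH
  refine ⟨τ, dpCount_eq_tset H τ hτ ?_⟩
  intro u v i j hadj
  rcases hH.1.2.1 u v i j hadj with h | h
  · exact Or.inl h
  · exact Or.inr ((adj_iff u v).1 h)

-- value of tset card
lemma tset_val (k' m : ℕ) (τ : Fin (m+2) → Equiv.Perm (Fin (k'+1))) (heven : Even (m+1)) :
    ((tset (k'+1) m τ).card : ℤ)
      = (k':ℤ)^(m+2) + (1 - (fixCount (k'+1) (rho τ (m+2)) : ℤ)) := by
  rw [tset_card, cset_card_int, heven.neg_one_pow]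
  ring

-- rho of family that is 1 except possibly at last
lemma rho_of_last {k m : ℕ} (σ : Equiv.Perm (Fin k))
    (τ : Fin (m+2) → Equiv.Perm (Fin k))
    (hτ : ∀ i, τ i = if i = Fin.last (m+1) then σ else 1) :
    rho τ (m+2) = σ := by
  have hsmall : ∀ j : ℕ, j ≤ m+1 → rho τ j = 1 := by
    intro j
    induction j with
    | zero => intro _; rfl
    | succ j ih =>
      intro hj
      show τ (j : Fin (m+2)) * rho τ j = 1
      rw [ih (by omega), hτ]
      have : ((j : ℕ) : Fin (m+2)) ≠ Fin.last (m+1) := by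
        intro hc
        have := congrArg Fin.val hc
        rw [Fin.val_cast_of_lt (by omega : j < m+2)] at this
        have : j = m+1 := this
        omega
      rw [if_neg this, mul_one]
  show τ ((m+1 : ℕ) : Fin (m+2)) * rho τ (m+1) = σ
  rw [hsmall (m+1) le_rfl, hτ, mul_one]
  have : (((m+1 : ℕ)) : Fin (m+2)) = Fin.last (m+1) := by
    ext
    rw [Fin.val_cast_of_lt (by omega)]
    rfl
  rw [if_pos this]

lemma fixCount_one (k : ℕ) : fixCount k (1 : Equiv.Perm (Fin k)) = k := by
  rw [fixCount]
  have : (univ.filter (fun b : Fin k => (1 : Equiv.Perm (Fin k)) b = b)) = univ := by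
    ext b; simp
  rw [this, Finset.card_univ, Fintype.card_fin]

lemma fixCount_finRotate (k' : ℕ) : fixCount (k'+2) (finRotate (k'+2)) = 0 := by
  rw [fixCount, Finset.card_eq_zero]
  ext b
  simp only [mem_filter, mem_univ, true_and, Finset.notMem_empty, iff_false]
  rw [finRotate_succ_apply]
  exact fun h => self_ne_add_one b h.symm

-- properCount via tset
lemma properCount_eq_tset (k m : ℕ) :
    properCount (SimpleGraph.cycleGraph (m+2)) k
      = (tset k m (fun _ => (1 : Equiv.Perm (Fin k)))).card := by
  rw [properCount, Nat.card_eq_fintype_card, Fintype.card_subtype]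
  congr 1
  apply Finset.filter_congr
  intro f _
  constructor
  · intro h i hc
    have hadj := adj_succ i
    exact h i (i+1) hadj (by rw [hc]; simp)
  · intro h u v hadj
    rcases (adj_iff u v).1 hadj with h1 | h1
    · subst h1
      intro hc
      exact h v (by rw [← hc]; simp)
    · subst h1
      intro hc
      exact h u (by rw [hc]; simp)


theorem stmt17 (n k : ℕ) (hn : 3 ≤ n) (hodd : Odd n) (hk : 2 ≤ k) :
    dualDPColorFn (SimpleGraph.cycleGraph n) k = (k - 1) ^ n + 1 ∧
    properCount (SimpleGraph.cycleGraph n) k = (k - 1) ^ n - (k - 1) ∧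
    (3 ≤ k →
      properCount (SimpleGraph.cycleGraph n) k <
        dualDPColorFn (SimpleGraph.cycleGraph n) k) := by

  obtain ⟨m, rfl⟩ : ∃ m, n = m + 2 := ⟨n - 2, by omega⟩
  have hm : 1 ≤ m := by omega
  obtain ⟨k'', rfl⟩ : ∃ k'', k = k'' + 2 := ⟨k - 2, by omega⟩
  have heven : Even (m+1) := by
    obtain ⟨c, hc⟩ := hodd
    exact ⟨c, by omega⟩
  have hsub : k'' + 2 - 1 = k'' + 1 := rfl
  rw [hsub]
  set X : ℕ := (k''+1)^(m+2) with hX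
  have hle : k'' + 1 ≤ X := Nat.le_self_pow (by omega) _
  -- proper count
  have hproper : properCount (SimpleGraph.cycleGraph (m+2)) (k''+2) = X - (k''+1) := by
    have hts := properCount_eq_tset (k''+2) m
    have hval := tset_val (k''+1) m (fun _ => (1 : Equiv.Perm (Fin (k''+2)))) heven
    rw [rho_of_last 1 _ (fun i => by split_ifs <;> rfl), fixCount_one] at hval
    rw [hts]
    have hcast : (((tset (k''+2) m (fun _ => (1:Equiv.Perm (Fin (k''+2))))).card : ℕ) : ℤ)
        = ((X - (k''+1) : ℕ) : ℤ) := by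
      rw [hval, Nat.cast_sub hle, hX]
      push_cast
      ring
    exact_mod_cast hcast
  -- upper bound
  have hub : ∀ q ∈ {q | ∃ H : SimpleGraph (Fin (m+2) × Fin (k''+2)),
      IsFullDPCover (SimpleGraph.cycleGraph (m+2)) (k''+2) H ∧ q = dpCount (k''+2) H},
      q ≤ X + 1 := by
    rintro q ⟨H, hH, rfl⟩
    obtain ⟨τ, hq⟩ := dpCount_full_cover hm H hH
    have hval := tset_val (k''+1) m τ heven
    have hfix : (0:ℤ) ≤ (fixCount (k''+1+1) (rho τ (m+2)) : ℤ) := Nat.cast_nonneg _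
    have h2 : ((dpCount (k''+2) H : ℕ) : ℤ) ≤ ((X + 1 : ℕ) : ℤ) := by
      rw [hq, hval, hX]
      push_cast
      linarith
    exact_mod_cast h2
  -- membership : the extremal cover
  have hmem : (X + 1) ∈ {q | ∃ H : SimpleGraph (Fin (m+2) × Fin (k''+2)),
      IsFullDPCover (SimpleGraph.cycleGraph (m+2)) (k''+2) H ∧ q = dpCount (k''+2) H} := by
    refine ⟨coverOf (k''+2) m
      (fun i => if i = Fin.last (m+1) then finRotate (k''+2) else 1),
      coverOf_full hm _, ?_⟩
    rw [dpCount_coverOf hm]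
    have hval := tset_val (k''+1) m
      (fun i => if i = Fin.last (m+1) then finRotate (k''+2) else 1) heven
    rw [rho_of_last (finRotate (k''+2)) _ (fun i => rfl), fixCount_finRotate] at hval
    have hcast : ((X + 1 : ℕ) : ℤ)
        = (((tset (k''+2) m (fun i => if i = Fin.last (m+1) then finRotate (k''+2) else 1)).card : ℕ) : ℤ) := by
      rw [hval, hX]
      push_cast
      ring
    exact_mod_cast hcast
  have hdual : dualDPColorFn (SimpleGraph.cycleGraph (m+2)) (k''+2) = X + 1 := by
    rw [dualDPColorFn]
    exact le_antisymm (csSup_le ⟨_, hmem⟩ hub) (le_csSup ⟨X + 1, hub⟩ hmem)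
  refine ⟨hdual, hproper, fun _ => ?_⟩
  rw [hproper, hdual]
  omega

end AuxStmt17
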